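/- Let (R, Ad_Γ) be a graded von Neumann algebra containing an odd unitary. If R is of type III, then the even part R^(0) is of type III. -/

import Mathlib

noncomputable section

variable {H : Type*} [NormedAddCommGroup H] [InnerProductSpace ℂ H] [CompleteSpace H]

/-- A self-adjoint unitary operator. -/
def IsSAU (Γ : H →L[ℂ] H) : Prop := star Γ = Γ ∧ Γ * Γ = 1

/-- The even part of a graded set of operators. -/
def evenPart (R : Set (H →L[ℂ] H)) (Γ : H →L[ℂ] H) : Set (H →L[ℂ] H) :=
  {x | x ∈ R ∧ Γ * x * Γ = x}

/-- The odd part of a graded set of operators. -/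
def oddPart (R : Set (H →L[ℂ] H)) (Γ : H →L[ℂ] H) : Set (H →L[ℂ] H) :=
  {x | x ∈ R ∧ Γ * x * Γ = -x}

/-- The center of a set of operators. -/
def centerSet (R : Set (H →L[ℂ] H)) : Set (H →L[ℂ] H) :=
  {x | x ∈ R ∧ ∀ y ∈ R, x * y = y * x}

/-- An (orthogonal) projection operator. -/
def IsProjOp (e : H →L[ℂ] H) : Prop := e * e = e ∧ star e = e

/-- `e` is a subprojection of `f`. -/
def SubProj (e f : H →L[ℂ] H) : Prop := e * f = e ∧ f * e = e

/-- Murray–von Neumann equivalence of projections relative to `M`. -/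
def MvNEquiv (M : Set (H →L[ℂ] H)) (e f : H →L[ℂ] H) : Prop :=
  ∃ v ∈ M, star v * v = e ∧ v * star v = f

/-- `e` is finite relative to `M`. -/
def FiniteProj (M : Set (H →L[ℂ] H)) (e : H →L[ℂ] H) : Prop :=
  ∀ f ∈ M, IsProjOp f → SubProj f e → MvNEquiv M f e → f = e

/-- `e` is an abelian projection relative to `M`: the corner `eMe` is commutative. -/
def AbelianProj (M : Set (H →L[ℂ] H)) (e : H →L[ℂ] H) : Prop :=
  ∀ x ∈ M, ∀ y ∈ M, (e * x * e) * (e * y * e) = (e * y * e) * (e * x * e)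

/-- A von Neumann algebra (given as a set) is of type III: no nonzero finite projections. -/
def TypeIII (M : Set (H →L[ℂ] H)) : Prop :=
  ∀ e ∈ M, IsProjOp e → FiniteProj M e → e = 0

/-- Type II₁ : finite with no nonzero abelian projections. -/
def TypeII1 (M : Set (H →L[ℂ] H)) : Prop :=
  FiniteProj M 1 ∧ ∀ e ∈ M, IsProjOp e → AbelianProj M e → e = 0

/-- Type I_n : the identity is the sum of `n` orthogonal, mutually equivalent
abelian projections. -/
def TypeI (M : Set (H →L[ℂ] H)) (n : Cardinal) : Prop :=
  ∃ (ι : Type) (E : ι → H →L[ℂ] H), Cardinal.mk ι = n ∧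
    (∀ a, E a ∈ M ∧ IsProjOp (E a) ∧ AbelianProj M (E a)) ∧
    (Pairwise fun a b => E a * E b = 0) ∧
    (∀ a b, MvNEquiv M (E a) (E b)) ∧
    (∀ v : H, HasSum (fun a => (E a) v) v)

/-- The scalar operators. -/
def scalarOps (H : Type*) [NormedAddCommGroup H] [InnerProductSpace ℂ H] [CompleteSpace H] :
    Set (H →L[ℂ] H) := Set.range fun c : ℂ => c • (1 : H →L[ℂ] H)

/-- `M` is a factor. -/
def IsFactor (M : Set (H →L[ℂ] H)) : Prop := centerSet M = scalarOps H

/-- `R` is graded by the self-adjoint unitary `Γ`. -/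
def GradedBy (R : Set (H →L[ℂ] H)) (Γ : H →L[ℂ] H) : Prop :=
  IsSAU Γ ∧ ∀ x ∈ R, Γ * x * Γ ∈ R

/-- The von Neumann algebra generated by a (star-closed, unital) set:
its double commutant. -/
def genVN (S : Set (H →L[ℂ] H)) : Set (H →L[ℂ] H) :=
  Set.centralizer (Set.centralizer S)

/-- `c` is the central support of `T` in `M`. -/
def IsCentralSupport (M : Set (H →L[ℂ] H)) (T c : H →L[ℂ] H) : Prop :=
  c ∈ centerSet M ∧ IsProjOp c ∧ c * T = T ∧
    ∀ d ∈ centerSet M, IsProjOp d → d * T = T → c * d = c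


open scoped InnerProductSpace

private lemma aux_commute_cfcnHom {a T : H →L[ℂ] H} (ha : IsSelfAdjoint a) (h : T * a = a * T)
    (f : ContinuousMapZero (quasispectrum ℝ a) ℝ) :
    T * (cfcₙHom (R := ℝ) ha f) = (cfcₙHom (R := ℝ) ha f) * T := by
  haveI : CompactSpace (quasispectrum ℝ a) := by
    have := NonUnitalContinuousFunctionalCalculus.isCompact_quasispectrum
      (R := ℝ) (p := IsSelfAdjoint) (A := H →L[ℂ] H) a
    exact isCompact_iff_compactSpace.mp this
  haveI : Fact (0 ∈ quasispectrum ℝ a) := ⟨quasispectrum.zero_mem ℝ a⟩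
  have h0 : ((0 : quasispectrum ℝ a) : ℝ) = 0 := rfl
  induction f using ContinuousMapZero.induction_on_of_compact with
  | zero => simp
  | id => rw [cfcₙHom_id ha]; exact h
  | star_id =>
      rw [star_trivial]
      rw [cfcₙHom_id ha]; exact h
  | add f g hf hg => rw [map_add, mul_add, add_mul, hf, hg]
  | mul f g hf hg =>
      rw [map_mul, ← mul_assoc, hf, mul_assoc, hg, mul_assoc]
  | smul r f hf =>
      rw [map_smul, mul_smul_comm, hf, smul_mul_assoc]
  | frequently f hf =>
      have hcl : IsClosed {g : ContinuousMapZero (quasispectrum ℝ a) ℝ |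
          T * (cfcₙHom (R := ℝ) ha g) = (cfcₙHom (R := ℝ) ha g) * T} := by
        apply isClosed_eq
        · exact (continuous_mul_left T).comp (cfcₙHom_continuous ha)
        · exact (continuous_mul_right T).comp (cfcₙHom_continuous ha)
      exact hcl.closure_subset (mem_closure_iff_frequently.mpr hf)

private lemma aux_commute_posPart {a T : H →L[ℂ] H} (ha : IsSelfAdjoint a) (h : T * a = a * T) :
    T * a⁺ = a⁺ * T := by
  rw [CFC.posPart_def,
    cfcₙ_apply (·⁺ : ℝ → ℝ) a (continuous_posPart.continuousOn) (by simp)]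
  exact aux_commute_cfcnHom ha h _

private lemma aux_range_projection (b : H →L[ℂ] H) :
    ∃ Q : H →L[ℂ] H, Q * Q = Q ∧ star Q = Q ∧ Q * b = b ∧
      (∀ c : H →L[ℂ] H, c * b = b → c * Q = Q) ∧
      (∀ x : H →L[ℂ] H, star b * x = 0 → Q * x = 0) ∧
      (∀ T : H →L[ℂ] H, T * b = b * T → star T * b = b * star T → T * Q = Q * T) := by
  set K : Submodule ℂ H := (LinearMap.range (b : H →ₗ[ℂ] H)).topologicalClosure with hK
  have hKcl : IsClosed (K : Set H) := (LinearMap.range (b : H →ₗ[ℂ] H)).isClosed_topologicalClosure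
  haveI : CompleteSpace K := hKcl.completeSpace_coe
  set Q : H →L[ℂ] H := K.subtypeL.comp (K.orthogonalProjectionOnto) with hQ
  have hQapp : ∀ ξ : H, Q ξ = (K.orthogonalProjectionOnto ξ : H) := fun ξ => rfl
  have hQmem : ∀ ξ : H, Q ξ ∈ K := fun ξ => (K.orthogonalProjectionOnto ξ).2
  have hQfix : ∀ ξ : H, ξ ∈ K → Q ξ = ξ := by
    intro ξ hξ
    exact K.starProjection_eq_self_iff.mpr hξ
  have hrange : ∀ ξ : H, b ξ ∈ K :=
    fun ξ => (LinearMap.range (b : H →ₗ[ℂ] H)).le_topologicalClosure (LinearMap.mem_range_self (b : H →ₗ[ℂ] H) ξ)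
  have hQsa : star Q = Q := by
    rw [ContinuousLinearMap.star_eq_adjoint]
    symm
    rw [ContinuousLinearMap.eq_adjoint_iff]
    intro x y
    exact Submodule.inner_starProjection_left_eq_right K x y
  refine ⟨Q, ?_, hQsa, ?_, ?_, ?_, ?_⟩
  · ext ξ
    exact hQfix _ (hQmem ξ)
  · ext ξ
    exact hQfix _ (hrange ξ)
  · intro c hc
    have hKle : K ≤ LinearMap.ker ((c - 1 : H →L[ℂ] H) : H →ₗ[ℂ] H) := by
      apply Submodule.topologicalClosure_minimal
      · rintro ξ ⟨η, rfl⟩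
        have hce : c (b η) = b η := by
          have := congrArg (fun z => z η) hc
          simpa [ContinuousLinearMap.mul_apply] using this
        rw [LinearMap.mem_ker]
        show (c - 1 : H →L[ℂ] H) (b η) = 0
        rw [ContinuousLinearMap.sub_apply, ContinuousLinearMap.one_apply, hce, sub_self]
      · exact ContinuousLinearMap.isClosed_ker ((c - 1) : H →L[ℂ] H)
    ext ξ
    have : (c - 1 : H →L[ℂ] H) (Q ξ) = 0 := hKle (hQmem ξ)
    have h1 : c (Q ξ) - Q ξ = 0 := by simpa using this
    have h2 : c (Q ξ) = Q ξ := by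
      have := sub_eq_zero.mp h1
      exact this
    simpa using h2
  · intro x hx
    ext η
    have hxo : x η ∈ Kᗮ := by
      rw [Submodule.mem_orthogonal]
      intro v hv
      rw [← inner_eq_zero_symm (𝕜 := ℂ)]
      have hker : K ≤ LinearMap.ker ((innerSL ℂ (x η) : H →L[ℂ] ℂ) : H →ₗ[ℂ] ℂ) := by
        apply Submodule.topologicalClosure_minimal
        · rintro ξ ⟨ζ, rfl⟩
          have h1 : ⟪b ζ, x η⟫_ℂ = ⟪ζ, (star b) (x η)⟫_ℂ := by
            rw [ContinuousLinearMap.star_eq_adjoint, ContinuousLinearMap.adjoint_inner_right]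
          have h2 : (star b) (x η) = 0 := by
            have := congrArg (fun z => z η) hx
            simpa [ContinuousLinearMap.mul_apply] using this
          have h3 : ⟪b ζ, x η⟫_ℂ = 0 := by rw [h1, h2, inner_zero_right]
          simp only [LinearMap.mem_ker, innerSL_apply_apply]
          rw [← inner_eq_zero_symm (𝕜 := ℂ)] at h3
          exact h3
        · exact ContinuousLinearMap.isClosed_ker (innerSL ℂ (x η))
      exact hker hv
    rw [ContinuousLinearMap.mul_apply, ContinuousLinearMap.zero_apply, hQapp,
      Submodule.orthogonalProjectionOnto_apply_of_mem_orthogonal hxo,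
      Submodule.coe_zero]
  · intro T hT hTs
    have hTK : ∀ v ∈ K, T v ∈ K := by
      intro v hv
      have hKle : K ≤ Submodule.comap (T : H →ₗ[ℂ] H) K := by
        apply Submodule.topologicalClosure_minimal
        · rintro ξ ⟨ζ, rfl⟩
          have hTb : T (b ζ) = b (T ζ) := by
            have := congrArg (fun z => z ζ) hT
            simpa [ContinuousLinearMap.mul_apply] using this
          apply Submodule.mem_comap.mpr
          show T (b ζ) ∈ K
          rw [hTb]
          exact hrange _
        · exact hKcl.preimage T.continuous
      exact hKle hv
    have hTsK : ∀ v ∈ K, (star T) v ∈ K := by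
      intro v hv
      have hKle : K ≤ Submodule.comap ((star T : H →L[ℂ] H) : H →ₗ[ℂ] H) K := by
        apply Submodule.topologicalClosure_minimal
        · rintro ξ ⟨ζ, rfl⟩
          have hTb : (star T) (b ζ) = b ((star T) ζ) := by
            have := congrArg (fun z => z ζ) hTs
            simpa [ContinuousLinearMap.mul_apply] using this
          apply Submodule.mem_comap.mpr
          show (star T) (b ζ) ∈ K
          rw [hTb]
          exact hrange _
        · exact hKcl.preimage (star T).continuous
      exact hKle hv
    ext ξ
    have hdecomp : T ξ = T (Q ξ) + T (ξ - Q ξ) := by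
      rw [← map_add]; congr 1; abel
    have h1 : Q (T (Q ξ)) = T (Q ξ) := hQfix _ (hTK _ (hQmem ξ))
    have h2 : T (ξ - Q ξ) ∈ Kᗮ := by
      rw [Submodule.mem_orthogonal]
      intro v hv
      have hh : ⟪v, T (ξ - Q ξ)⟫_ℂ = ⟪(star T) v, ξ - Q ξ⟫_ℂ := by
        rw [ContinuousLinearMap.star_eq_adjoint, ContinuousLinearMap.adjoint_inner_left]
      rw [hh]
      have hmem : ξ - Q ξ ∈ Kᗮ := by
        have := Submodule.sub_starProjection_mem_orthogonal (K := K) ξ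
        exact this
      exact (Submodule.mem_orthogonal K _).mp hmem _ (hTsK _ hv)
    have h3 : Q (T (ξ - Q ξ)) = 0 := by
      rw [hQapp, Submodule.orthogonalProjectionOnto_apply_of_mem_orthogonal h2,
        Submodule.coe_zero]
    rw [ContinuousLinearMap.mul_apply, ContinuousLinearMap.mul_apply]
    rw [hdecomp, map_add, h1, h3, add_zero]

private lemma aux_pisom {v h : H →L[ℂ] H} (h1 : star v * v = h) (h2 : h * h = h) :
    v * h = v := by
  have hsa : star h = h := by rw [← h1, star_mul, star_star]
  have key : star (v * h - v) * (v * h - v) = 0 := by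
    have expand : star (v * h - v) * (v * h - v)
        = star h * (star v * v) * h - star h * (star v * v) - (star v * v) * h
          + star v * v := by
      rw [star_sub, star_mul, hsa]
      noncomm_ring
    rw [expand, h1, hsa]
    simp only [h2]
    abel
  have := (CStarRing.star_mul_self_eq_zero_iff (v * h - v)).mp key
  rwa [sub_eq_zero] at this

private lemma aux_pisom' {v q : H →L[ℂ] H} (h1 : v * star v = q) (h2 : q * q = q) :
    q * v = v := by
  have h1' : star (star v) * (star v) = q := by rwa [star_star]
  have hmain := aux_pisom h1' h2
  have hqsa : star q = q := by rw [← h1, star_mul, star_star]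
  calc q * v = star (star v * star q) := by rw [star_mul, star_star, star_star]
    _ = star (star v * q) := by rw [hqsa]
    _ = star (star v) := by rw [hmain]
    _ = v := star_star v

private lemma aux_star_comm_zero {x y : H →L[ℂ] H} (hx : star x = x) (hy : star y = y)
    (h : x * y = 0) : y * x = 0 := by
  have := congrArg star h
  rwa [star_mul, hx, hy, star_zero] at this

set_option maxHeartbeats 2000000 in
/-- if `R` has an odd unitary and is of type III, then `R⁰` is of type III. -/
theorem stmt_10 (R : VonNeumannAlgebra H) (Γ : H →L[ℂ] H) (hΓ : IsSAU Γ)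
    (hinv : ∀ x ∈ R, Γ * x * Γ ∈ R) (U : H →L[ℂ] H)
    (hU : U ∈ oddPart (R : Set (H →L[ℂ] H)) Γ)
    (hUun : star U * U = 1 ∧ U * star U = 1)
    (hIII : TypeIII (R : Set (H →L[ℂ] H))) :
    TypeIII (evenPart (R : Set (H →L[ℂ] H)) Γ) := by
  obtain ⟨hΓsa, hΓ2⟩ := hΓ
  have conjmul : ∀ x y : H →L[ℂ] H, (Γ*x*Γ) * (Γ*y*Γ) = Γ*(x*y)*Γ := by
    intro x y
    have h1 : (Γ*x*Γ) * (Γ*y*Γ) = Γ*x*((Γ*Γ)*y)*Γ := by noncomm_ring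
    rw [h1, hΓ2]
    noncomm_ring
  have conjstar : ∀ x : H →L[ℂ] H, star (Γ*x*Γ) = Γ*(star x)*Γ := by
    intro x
    rw [star_mul, star_mul, hΓsa]
    noncomm_ring
  have conjconj : ∀ x : H →L[ℂ] H, Γ*(Γ*x*Γ)*Γ = x := by
    intro x
    have h1 : Γ*(Γ*x*Γ)*Γ = (Γ*Γ)*x*(Γ*Γ) := by noncomm_ring
    rw [h1, hΓ2]
    noncomm_ring
  intro e he heproj hefin
  obtain ⟨heR, heΓ⟩ := he
  obtain ⟨heid, hesa⟩ := heproj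
  have heR' : e ∈ R := heR
  -- Hereditary finiteness: even projections under `e` are finite in the even part.
  have hered : ∀ G g w : H →L[ℂ] H, G ∈ R → Γ*G*Γ = G → G*G = G → star G = G →
      G*e = G → e*G = G → g ∈ R → Γ*g*Γ = g → g*g = g → star g = g → g*G = g → G*g = g →
      w ∈ R → Γ*w*Γ = w → star w * w = g → w * star w = G → g = G := by
    intro G g w hGR hGΓ hGid hGsa hGe heG hgR hgΓ hgid hgsa hgG hGg hwR hwΓ hw1 hw2
    have hwg : w * g = w := aux_pisom hw1 hgid
    have hGw : G * w = w := aux_pisom' hw2 hGid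
    have hge : g * e = g := by rw [← hgG, mul_assoc, hGe]
    have heg : e * g = g := by rw [← hGg, ← mul_assoc, heG]
    have hsw : star w * G = star w := by
      have h1 : star (G * w) = star w * G := by rw [star_mul, hGsa]
      rw [← h1, hGw]
    have hew : e * w = w := by rw [← hGw, ← mul_assoc, heG]
    have hswe : star w * e = star w := by
      have h1 : star (e * w) = star w * e := by rw [star_mul, hesa]
      rw [← h1, hew]
    have hwe2 : w * e = w := by rw [← hwg, mul_assoc, hge]
    have hwG : w * G = w := by rw [← hwg, mul_assoc, hgG]
    have hwEG : w * (e - G) = 0 := by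
      rw [mul_sub, hwe2, hwG, sub_self]
    have hEGw : (e - G) * star w = 0 := by
      have := congrArg star hwEG
      rwa [star_mul, star_sub, hesa, hGsa, star_zero] at this
    have hswEG : star w * (e - G) = 0 := by
      rw [mul_sub, hswe, hsw, sub_self]
    have hEGw2 : (e - G) * w = 0 := by
      rw [sub_mul, hew, hGw, sub_self]
    have hEGid : (e - G) * (e - G) = e - G := by
      rw [sub_mul, mul_sub, mul_sub, heid, heG, hGe, hGid]
      abel
    have hEGsa : star (e - G) = e - G := by rw [star_sub, hesa, hGsa]
    have hEGR : e - G ∈ R := sub_mem heR' hGR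
    have hEGΓ : Γ*(e - G)*Γ = e - G := by
      have h1 : Γ*(e - G)*Γ = Γ*e*Γ - Γ*G*Γ := by noncomm_ring
      rw [h1, heΓ, hGΓ]
    have hgEG : g * (e - G) = 0 := by
      rw [mul_sub, hge, hgG, sub_self]
    have hEGg : (e - G) * g = 0 := aux_star_comm_zero hgsa hEGsa hgEG
    have hkid : (g + (e - G)) * (g + (e - G)) = g + (e - G) := by
      rw [add_mul, mul_add, mul_add, hgid, hgEG, hEGg, hEGid]
      abel
    have hksa : star (g + (e - G)) = g + (e - G) := by rw [star_add, hgsa, hEGsa]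
    have hksub1 : (g + (e - G)) * e = g + (e - G) := by
      rw [add_mul, hge, sub_mul, heid, hGe]
    have hksub2 : e * (g + (e - G)) = g + (e - G) := by
      rw [mul_add, heg, mul_sub, heid, heG]
    have hwt1 : star (w + (e - G)) * (w + (e - G)) = g + (e - G) := by
      rw [star_add, hEGsa, add_mul, mul_add, mul_add, hw1, hswEG, hEGw2, hEGid]
      abel
    have hwt2 : (w + (e - G)) * star (w + (e - G)) = e := by
      rw [star_add, hEGsa, add_mul, mul_add, mul_add, hw2, hwEG, hEGw, hEGid]
      abel
    have hkmem : (g + (e - G)) ∈ evenPart (R : Set (H →L[ℂ] H)) Γ := by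
      refine ⟨add_mem hgR hEGR, ?_⟩
      have h1 : Γ*(g + (e - G))*Γ = Γ*g*Γ + Γ*(e - G)*Γ := by noncomm_ring
      rw [h1, hgΓ, hEGΓ]
    have hwmem : (w + (e - G)) ∈ evenPart (R : Set (H →L[ℂ] H)) Γ := by
      refine ⟨add_mem hwR hEGR, ?_⟩
      have h1 : Γ*(w + (e - G))*Γ = Γ*w*Γ + Γ*(e - G)*Γ := by noncomm_ring
      rw [h1, hwΓ, hEGΓ]
    have hfinal := hefin (g + (e - G)) hkmem ⟨hkid, hksa⟩ ⟨hksub1, hksub2⟩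
      ⟨w + (e - G), hwmem, hwt1, hwt2⟩
    have : g = e - (e - G) := by
      rw [eq_sub_iff_add_eq]
      exact hfinal
    rw [sub_sub_cancel] at this
    exact this
  -- corner elements of pure odd parity vanish, in case A
  have cornerstar : ∀ x : H →L[ℂ] H, e*x*e = x → e*(star x)*e = star x := by
    intro x hx
    have h1 : star (e*x*e) = e*(star x)*e := by
      rw [star_mul, star_mul, hesa]
      noncomm_ring
    rw [← h1, hx]
  by_cases hA : ∀ z : H →L[ℂ] H, z ∈ R → Γ*z*Γ = -z → star z = z → e * z * e = 0
  · -- CASE A: the corner eRe has no odd part, so witnesses are even.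
    have cornerzero : ∀ d : H →L[ℂ] H, d ∈ R → Γ*d*Γ = -d → e*d*e = d → d = 0 := by
      intro d hdR hdodd hdcorner
      have hsd_odd : Γ*(star d)*Γ = -(star d) := by
        rw [← conjstar d, hdodd, star_neg]
      have hsd_corner : e*(star d)*e = star d := cornerstar d hdcorner
      have hz1 : d + star d = 0 := by
        have h := hA (d + star d) (add_mem hdR (star_mem hdR)) ?_ ?_
        · rw [← h]
          have h2 : e*(d + star d)*e = e*d*e + e*(star d)*e := by noncomm_ring
          rw [h2, hdcorner, hsd_corner]
        · have h2 : Γ*(d + star d)*Γ = Γ*d*Γ + Γ*(star d)*Γ := by noncomm_ring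
          rw [h2, hdodd, hsd_odd]
          abel
        · rw [star_add, star_star]
          abel
      have hz2 : d - star d = 0 := by
        have hmem : Complex.I • (d - star d) ∈ R := by
          have h1 : (d - star d) ∈ R := sub_mem hdR (star_mem hdR)
          exact R.toStarSubalgebra.smul_mem h1 Complex.I
        have hodd2 : Γ*(Complex.I • (d - star d))*Γ = -(Complex.I • (d - star d)) := by
          have h1 : Γ*(Complex.I • (d - star d))*Γ = Complex.I • (Γ*(d - star d)*Γ) := by
            rw [mul_smul_comm, smul_mul_assoc]
          have h2 : Γ*(d - star d)*Γ = -(d - star d) := by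
            have h3 : Γ*(d - star d)*Γ = Γ*d*Γ - Γ*(star d)*Γ := by noncomm_ring
            rw [h3, hdodd, hsd_odd]
            abel
          rw [h1, h2, smul_neg]
        have hsa2 : star (Complex.I • (d - star d)) = Complex.I • (d - star d) := by
          rw [star_smul, star_sub, star_star, Complex.star_def, Complex.conj_I]
          rw [neg_smul, ← smul_neg, neg_sub]
        have h := hA _ hmem hodd2 hsa2
        have hco : e*(Complex.I • (d - star d))*e = Complex.I • (d - star d) := by
          have h1 : e*(Complex.I • (d - star d))*e = Complex.I • (e*(d - star d)*e) := by
            rw [mul_smul_comm, smul_mul_assoc]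
          have h2 : e*(d - star d)*e = d - star d := by
            have h3 : e*(d - star d)*e = e*d*e - e*(star d)*e := by noncomm_ring
            rw [h3, hdcorner, hsd_corner]
          rw [h1, h2]
        have hz : Complex.I • (d - star d) = 0 := by rw [← hco, h]
        rcases smul_eq_zero.mp hz with h' | h'
        · exact absurd h' Complex.I_ne_zero
        · exact h'
      have h2d : (2:ℂ) • d = 0 := by
        have hdd : d + d = 0 := by
          have hsum : (d + star d) + (d - star d) = d + d := by abel
          rw [← hsum, hz1, hz2, add_zero]
        rw [two_smul]
        exact hdd
      rcases smul_eq_zero.mp h2d with h' | h'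
      · norm_num at h'
      · exact h'
    refine hIII e heR' ⟨heid, hesa⟩ ?_
    intro f hfR hfproj hfsub hfmv
    obtain ⟨hfid, hfsa⟩ := hfproj
    obtain ⟨hfe, hef⟩ := hfsub
    obtain ⟨v, hvR, hv1, hv2⟩ := hfmv
    have hvR' : v ∈ R := hvR
    have hvf : v * f = v := aux_pisom hv1 hfid
    have hev : e * v = v := aux_pisom' hv2 heid
    have hve : v * e = v := by rw [← hvf, mul_assoc, hfe]
    have heve : e*v*e = v := by rw [hev, hve]
    have hd_mem : v - Γ*v*Γ ∈ R := sub_mem hvR' (hinv v hvR')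
    have hdodd : Γ*(v - Γ*v*Γ)*Γ = -(v - Γ*v*Γ) := by
      have h1 : Γ*(v - Γ*v*Γ)*Γ = Γ*v*Γ - Γ*(Γ*v*Γ)*Γ := by noncomm_ring
      rw [h1, conjconj]
      abel
    have hdcorner : e*(v - Γ*v*Γ)*e = v - Γ*v*Γ := by
      have h1 : e*(v - Γ*v*Γ)*e = e*v*e - e*(Γ*v*Γ)*e := by noncomm_ring
      have h2 : e*(Γ*v*Γ)*e = Γ*v*Γ := by
        conv_lhs => rw [← heΓ]
        rw [conjmul, conjmul, heve]
      rw [h1, h2, heve]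
    have hveq : v - Γ*v*Γ = 0 := cornerzero _ hd_mem hdodd hdcorner
    have hvΓ : Γ*v*Γ = v := (sub_eq_zero.mp hveq).symm
    have hfΓ : Γ*f*Γ = f := by
      rw [← hv1, ← conjmul, ← conjstar, hvΓ]
    exact hefin f ⟨hfR, hfΓ⟩ ⟨hfid, hfsa⟩ ⟨hfe, hef⟩ ⟨v, ⟨hvR, hvΓ⟩, hv1, hv2⟩
  · -- CASE B: an odd self-adjoint corner element exists; derive a contradiction.
    exfalso
    push_neg at hA
    obtain ⟨z, hzR, hzodd, hzsa, hzne⟩ := hA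
    -- key: the positive part of any odd self-adjoint corner element is zero
    have keyB : ∀ y : H →L[ℂ] H, y ∈ R → star y = y → Γ*y*Γ = -y →
        e*y = y → y*e = y → y⁺ = 0 := by
      intro y hyR hysa hyodd hey hye
      by_contra hp
      have hIsa : IsSelfAdjoint y := hysa
      have hsub : y⁺ - y⁻ = y := CFC.posPart_sub_negPart y hIsa
      have hpn : y⁺ * y⁻ = 0 := CFC.posPart_mul_negPart y
      have hnp : y⁻ * y⁺ = 0 := CFC.negPart_mul_posPart y
      have hppos : (0 : H →L[ℂ] H) ≤ y⁺ := CFC.posPart_nonneg y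
      have hnpos : (0 : H →L[ℂ] H) ≤ y⁻ := CFC.negPart_nonneg y
      have hpsa : star (y⁺) = y⁺ := hppos.isSelfAdjoint.star_eq
      have hnsa : star (y⁻) = y⁻ := hnpos.isSelfAdjoint.star_eq
      -- Jordan decomposition conjugation
      have hΓpn : Γ*(y⁺)*Γ = y⁻ ∧ Γ*(y⁻)*Γ = y⁺ := by
        have hbc : (Γ*(y⁺)*Γ) * (Γ*(y⁻)*Γ) = 0 := by
          rw [conjmul, hpn]
          simp
        have hb : (0 : H →L[ℂ] H) ≤ Γ*(y⁺)*Γ := by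
          have := star_left_conjugate_nonneg hppos Γ
          rwa [hΓsa] at this
        have hc : (0 : H →L[ℂ] H) ≤ Γ*(y⁻)*Γ := by
          have := star_left_conjugate_nonneg hnpos Γ
          rwa [hΓsa] at this
        have habc : -y = (Γ*(y⁺)*Γ) - (Γ*(y⁻)*Γ) := by
          rw [← hyodd]
          conv_lhs => rw [← hsub]
          noncomm_ring
        have huniq := CFC.posPart_negPart_unique habc hbc hb hc
        rw [CFC.posPart_neg y, CFC.negPart_neg y] at huniq
        exact ⟨huniq.1.symm, huniq.2.symm⟩
      have hyp : y * y⁺ = y⁺ * y⁺ := by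
        have h1 := congrArg (fun t => t * y⁺) hsub
        rw [sub_mul, hnp, sub_zero] at h1
        exact h1.symm
      have heb : e * (y⁺ * y⁺) = y⁺ * y⁺ := by
        rw [← hyp, ← mul_assoc, hey]
      have hbsa : star (y⁺ * y⁺) = y⁺ * y⁺ := by rw [star_mul, hpsa]
      have hnnsa : star (y⁻ * y⁻) = y⁻ * y⁻ := by rw [star_mul, hnsa]
      have hbne : (y⁺ * y⁺ : H →L[ℂ] H) ≠ 0 := by
        intro h0
        apply hp
        apply (CStarRing.star_mul_self_eq_zero_iff (y⁺)).mp
        rw [hpsa]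
        exact h0
      have hΓb : Γ*(y⁺ * y⁺)*Γ = y⁻ * y⁻ := by rw [← conjmul, hΓpn.1]
      have hbb' : (y⁺ * y⁺) * (y⁻ * y⁻) = 0 := by
        have h1 : (y⁺ * y⁺) * (y⁻ * y⁻) = y⁺*(y⁺*y⁻)*y⁻ := by noncomm_ring
        rw [h1, hpn]
        simp
      obtain ⟨Q, hQid, hQsa, hQb, hQfix, hQorth, hQcomm⟩ := aux_range_projection (y⁺ * y⁺)
      have hQne : Q ≠ 0 := fun h0 => hbne (by rw [← hQb, h0, zero_mul])
      have hQR : Q ∈ (R : Set (H →L[ℂ] H)) := by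
        rw [← R.centralizer_centralizer]
        rw [Set.mem_centralizer_iff]
        intro T hT
        have hTy : T * y = y * T := (hT y hyR).symm
        have hTsy : star T * y = y * star T := by
          have h1 := hT y hyR
          have h2 := congrArg star h1
          rwa [star_mul, star_mul, hysa] at h2
        have hTp : T * y⁺ = y⁺ * T := aux_commute_posPart hIsa hTy
        have hTsp : star T * y⁺ = y⁺ * star T := aux_commute_posPart hIsa hTsy
        have hTb : T * (y⁺ * y⁺) = (y⁺ * y⁺) * T := by
          rw [← mul_assoc, hTp, mul_assoc, hTp, mul_assoc]
        have hTsb : star T * (y⁺ * y⁺) = (y⁺ * y⁺) * star T := by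
          rw [← mul_assoc, hTsp, mul_assoc, hTsp, mul_assoc]
        exact hQcomm T hTb hTsb
      have hQR' : Q ∈ R := hQR
      have hQe : e * Q = Q := hQfix e heb
      have hQe' : Q * e = Q := by
        have h1 := congrArg star hQe
        rwa [star_mul, hQsa, hesa] at h1
      have hQ'R : Γ*Q*Γ ∈ R := hinv Q hQR'
      have hQ'id : (Γ*Q*Γ) * (Γ*Q*Γ) = Γ*Q*Γ := by rw [conjmul, hQid]
      have hQ'sa : star (Γ*Q*Γ) = Γ*Q*Γ := by rw [conjstar, hQsa]
      have hQnn : Q * (y⁻ * y⁻) = 0 := by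
        apply hQorth
        rw [hbsa]
        exact hbb'
      have hnnQ : (y⁻ * y⁻) * Q = 0 := aux_star_comm_zero hQsa hnnsa hQnn
      have hbQ' : (y⁺ * y⁺) * (Γ*Q*Γ) = 0 := by
        have hb' : (y⁺ * y⁺) = Γ*(y⁻ * y⁻)*Γ := by rw [← hΓb, conjconj]
        conv_lhs => rw [hb']
        rw [conjmul, hnnQ]
        simp
      have hQQ' : Q * (Γ*Q*Γ) = 0 := by
        apply hQorth
        rw [hbsa]
        exact hbQ'
      have hQ'Q : (Γ*Q*Γ) * Q = 0 := aux_star_comm_zero hQsa hQ'sa hQQ'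
      have hQ'e : e * (Γ*Q*Γ) = Γ*Q*Γ := by
        conv_lhs => rw [← heΓ]
        rw [conjmul, hQe]
      have heQ' : (Γ*Q*Γ) * e = Γ*Q*Γ := by
        conv_lhs => rw [← heΓ]
        rw [conjmul, hQe']
      -- Q is infinite in R
      have hnotfin : ¬ FiniteProj (R : Set (H →L[ℂ] H)) Q :=
        fun hf => hQne (hIII Q hQR ⟨hQid, hQsa⟩ hf)
      unfold FiniteProj at hnotfin
      push_neg at hnotfin
      obtain ⟨k, hkR, hkproj, hksub, hkmv, hkne⟩ := hnotfin
      obtain ⟨hkid, hksa⟩ := hkproj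
      obtain ⟨hkQ, hQk⟩ := hksub
      obtain ⟨m, hmR, hm1, hm2⟩ := hkmv
      have hkR' : k ∈ R := hkR
      have hmR' : m ∈ R := hmR
      have hmk : m * k = m := aux_pisom hm1 hkid
      have hQm : Q * m = m := aux_pisom' hm2 hQid
      have hm'R : Γ*m*Γ ∈ R := hinv m hmR'
      have hk'R : Γ*k*Γ ∈ R := hinv k hkR'
      have hk'id : (Γ*k*Γ)*(Γ*k*Γ) = Γ*k*Γ := by rw [conjmul, hkid]
      have hk'sa : star (Γ*k*Γ) = Γ*k*Γ := by rw [conjstar, hksa]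
      have hm'1 : star (Γ*m*Γ) * (Γ*m*Γ) = Γ*k*Γ := by rw [conjstar, conjmul, hm1]
      have hm'2 : (Γ*m*Γ) * star (Γ*m*Γ) = Γ*Q*Γ := by rw [conjstar, conjmul, hm2]
      have hm'k' : (Γ*m*Γ)*(Γ*k*Γ) = Γ*m*Γ := by rw [conjmul, hmk]
      have hQ'm' : (Γ*Q*Γ)*(Γ*m*Γ) = Γ*m*Γ := by rw [conjmul, hQm]
      have hk'Q' : (Γ*k*Γ)*(Γ*Q*Γ) = Γ*k*Γ := by rw [conjmul, hkQ]
      have hQ'k' : (Γ*Q*Γ)*(Γ*k*Γ) = Γ*k*Γ := by rw [conjmul, hQk]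
      have hsmQ : star m = star m * Q := by
        conv_lhs => rw [← hQm]
        rw [star_mul, hQsa]
      have hcross1 : star m * (Γ*m*Γ) = 0 := by
        rw [hsmQ]
        conv_lhs => rw [← hQ'm']
        have h1 : (star m * Q) * ((Γ*Q*Γ) * (Γ*m*Γ)) = star m * (Q * (Γ*Q*Γ)) * (Γ*m*Γ) := by
          noncomm_ring
        rw [h1, hQQ']
        simp
      have hcross1' : star (Γ*m*Γ) * m = 0 := by
        have h1 := congrArg star hcross1
        rwa [star_mul, star_star, star_zero] at h1
      have hkQ'0 : k * (Γ*Q*Γ) = 0 := by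
        conv_lhs => rw [← hkQ]
        rw [mul_assoc, hQQ', mul_zero]
      have hk'Q0 : (Γ*k*Γ) * Q = 0 := by
        conv_lhs => rw [← hk'Q']
        rw [mul_assoc, hQ'Q, mul_zero]
      have hQk'0 : Q * (Γ*k*Γ) = 0 := by
        conv_lhs => rw [← hQ'k']
        rw [← mul_assoc, hQQ', zero_mul]
      have hQ'k0 : (Γ*Q*Γ) * k = 0 := by
        conv_lhs => rw [← hQk]
        rw [← mul_assoc, hQ'Q, zero_mul]
      have hkk' : k * (Γ*k*Γ) = 0 := by
        conv_lhs => rw [← hQ'k']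
        rw [← mul_assoc, hkQ'0, zero_mul]
      have hk'k : (Γ*k*Γ) * k = 0 := aux_star_comm_zero hksa hk'sa hkk'
      have hcross2 : m * star (Γ*m*Γ) = 0 := by
        have hstar : star (Γ*m*Γ) = (Γ*k*Γ) * star (Γ*m*Γ) := by
          conv_lhs => rw [← hm'k']
          rw [star_mul, hk'sa]
        have h1 : m * ((Γ*k*Γ) * star (Γ*m*Γ)) = (m * k) * ((Γ*k*Γ) * star (Γ*m*Γ)) := by
          rw [hmk]
        have h2 : (m * k) * ((Γ*k*Γ) * star (Γ*m*Γ)) = m * (k * (Γ*k*Γ)) * star (Γ*m*Γ) := by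
          noncomm_ring
        rw [hstar, h1, h2, hkk']
        simp
      have hcross2' : (Γ*m*Γ) * star m = 0 := by
        have h1 := congrArg star hcross2
        rwa [star_mul, star_star, star_zero] at h1
      -- build the even witness pair
      have hw1 : star (m + Γ*m*Γ) * (m + Γ*m*Γ) = k + Γ*k*Γ := by
        rw [star_add, add_mul, mul_add, mul_add, hm1, hm'1, hcross1, hcross1']
        abel
      have hw2 : (m + Γ*m*Γ) * star (m + Γ*m*Γ) = Q + Γ*Q*Γ := by
        rw [star_add, add_mul, mul_add, mul_add, hm2, hm'2, hcross2, hcross2']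
        abel
      have hgid : (k + Γ*k*Γ)*(k + Γ*k*Γ) = k + Γ*k*Γ := by
        rw [add_mul, mul_add, mul_add, hkid, hk'id, hkk', hk'k]
        abel
      have hgsa : star (k + Γ*k*Γ) = k + Γ*k*Γ := by rw [star_add, hksa, hk'sa]
      have hgR : k + Γ*k*Γ ∈ R := add_mem hkR' hk'R
      have hgΓ : Γ*(k + Γ*k*Γ)*Γ = k + Γ*k*Γ := by
        have h1 : Γ*(k + Γ*k*Γ)*Γ = Γ*k*Γ + Γ*(Γ*k*Γ)*Γ := by noncomm_ring
        rw [h1, conjconj]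
        abel
      have hGid : (Q + Γ*Q*Γ)*(Q + Γ*Q*Γ) = Q + Γ*Q*Γ := by
        rw [add_mul, mul_add, mul_add, hQid, hQ'id, hQQ', hQ'Q]
        abel
      have hGsa : star (Q + Γ*Q*Γ) = Q + Γ*Q*Γ := by rw [star_add, hQsa, hQ'sa]
      have hGR : Q + Γ*Q*Γ ∈ R := add_mem hQR' hQ'R
      have hGΓ : Γ*(Q + Γ*Q*Γ)*Γ = Q + Γ*Q*Γ := by
        have h1 : Γ*(Q + Γ*Q*Γ)*Γ = Γ*Q*Γ + Γ*(Γ*Q*Γ)*Γ := by noncomm_ring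
        rw [h1, conjconj]
        abel
      have hGe : (Q + Γ*Q*Γ)*e = Q + Γ*Q*Γ := by rw [add_mul, hQe', heQ']
      have heG : e*(Q + Γ*Q*Γ) = Q + Γ*Q*Γ := by rw [mul_add, hQe, hQ'e]
      have hgG : (k + Γ*k*Γ)*(Q + Γ*Q*Γ) = k + Γ*k*Γ := by
        rw [add_mul, mul_add, mul_add, hkQ, hkQ'0, hk'Q0, hk'Q']
        abel
      have hGg : (Q + Γ*Q*Γ)*(k + Γ*k*Γ) = k + Γ*k*Γ := by
        rw [mul_add, add_mul, add_mul, hQk, hQk'0, hQ'k0, hQ'k']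
        abel
      have hwR : m + Γ*m*Γ ∈ R := add_mem hmR' hm'R
      have hwΓ : Γ*(m + Γ*m*Γ)*Γ = m + Γ*m*Γ := by
        have h1 : Γ*(m + Γ*m*Γ)*Γ = Γ*m*Γ + Γ*(Γ*m*Γ)*Γ := by noncomm_ring
        rw [h1, conjconj]
        abel
      have hfin := hered (Q + Γ*Q*Γ) (k + Γ*k*Γ) (m + Γ*m*Γ) hGR hGΓ hGid hGsa hGe heG
        hgR hgΓ hgid hgsa hgG hGg hwR hwΓ hw1 hw2
      -- cut down with Q to get k = Q
      apply hkne
      have e1 : Q*(k + Γ*k*Γ) = k := by rw [mul_add, hQk, hQk'0, add_zero]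
      have e2 : Q*(Q + Γ*Q*Γ) = Q := by rw [mul_add, hQid, hQQ', add_zero]
      have e3 : Q*(k + Γ*k*Γ)*Q = k := by rw [e1, hkQ]
      have e4 : Q*(Q + Γ*Q*Γ)*Q = Q := by rw [e2, hQid]
      rw [← e3, hfin, e4]
    -- apply keyB to y := e*z*e and its negation
    have hzR' : z ∈ R := hzR
    have hyR : e*z*e ∈ R := mul_mem (mul_mem heR' hzR') heR'
    have hysa : star (e*z*e) = e*z*e := by
      rw [star_mul, star_mul, hzsa, hesa, mul_assoc]
    have hyodd : Γ*(e*z*e)*Γ = -(e*z*e) := by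
      rw [← conjmul, ← conjmul, heΓ, hzodd]
      noncomm_ring
    have hey : e*(e*z*e) = e*z*e := by rw [← mul_assoc, ← mul_assoc, heid]
    have hye : (e*z*e)*e = e*z*e := by rw [mul_assoc (e*z) e e, heid]
    have h1 : (e*z*e)⁺ = 0 := keyB (e*z*e) hyR hysa hyodd hey hye
    have h2 : (-(e*z*e))⁺ = 0 := by
      refine keyB (-(e*z*e)) (neg_mem hyR) (by rw [star_neg, hysa]) ?_ ?_ ?_
      · have h3 : Γ*(-(e*z*e))*Γ = -(Γ*(e*z*e)*Γ) := by noncomm_ring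
        rw [h3, hyodd]
      · rw [mul_neg, hey]
      · rw [neg_mul, hye]
    have h3 : (e*z*e)⁻ = 0 := by
      rw [← CFC.posPart_neg (e*z*e)]
      exact h2
    have h4 : e*z*e = 0 := by
      have h5 := CFC.posPart_sub_negPart (e*z*e) (show IsSelfAdjoint (e*z*e) from hysa)
      rw [h1, h3, sub_zero] at h5
      exact h5.symm
    exact hzne h4
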